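/- Let 1 ≤ p ≤ 2, C > 0, 1/2 < α < 1, and let (r_m)_{m≥0} be a nonincreasing sequence of nonnegative reals with m^{p/2} r_m → C_p as m → ∞. Let k ≥ 1 be an integer and T ~ Bin(m, 1/k). Then Σ_{i=0}^m P(T = i) r_i ≥ (1 − 2 e^{−C² m^{2α−1}}) · r_{⌈m/k + C m^α⌉}, and consequently liminf_{m→∞} m^{p/2} Σ_{i=0}^m P(T = i) r_i ≥ C_p · k^{p/2}. -/

import Mathlib

open Filter Real

-- core elementary inequality
lemma lemA (q t : ℝ) (hq0 : 0 ≤ q) (hq1 : q ≤ 1) (ht0 : 0 ≤ t) (ht2 : t ≤ 2) :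
    q * (1 - q) * (Real.exp t - 1) ≤ t / 2 * (1 - q + q * Real.exp t) := by
  set E := Real.exp (t / 2) with hE
  have hEpos : 0 < E := Real.exp_pos _
  have hEt : Real.exp t = E ^ 2 := by
    rw [hE, sq, ← Real.exp_add]; ring_nf
  have hx1 : t / 2 ≤ 1 := by linarith
  have h1 : 1 - t / 2 ≤ Real.exp (-(t / 2)) := by
    have := Real.add_one_le_exp (-(t / 2)); linarith
  have hinv : Real.exp (-(t / 2)) = E⁻¹ := by rw [Real.exp_neg, hE]
  have h2 : (1 - t / 2) * E ≤ 1 := by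
    rw [hinv] at h1
    calc (1 - t/2) * E ≤ E⁻¹ * E := by
          apply mul_le_mul_of_nonneg_right h1 hEpos.le
      _ = 1 := inv_mul_cancel₀ hEpos.ne'
  have h3 : 1 - E⁻¹ ≤ t / 2 := by
    rw [← hinv]
    have := Real.add_one_le_exp (-(t / 2))
    nlinarith [Real.exp_pos (-(t/2))]
  have hE3 : E ≤ 3 := by
    have : Real.exp (t/2) ≤ Real.exp 1 := Real.exp_le_exp.mpr hx1
    have h9 := Real.exp_one_lt_d9
    rw [hE]; linarith
  -- step 1 : E^2 - 1 ≤ 2 t E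
  have step1 : E ^ 2 - 1 ≤ 2 * t * E := by
    -- E - E⁻¹ ≤ 2 t
    have hEE : E - E⁻¹ ≤ 2 * t := by
      have ha : E - 1 ≤ (t/2) * E := by nlinarith
      have hb : 1 - E⁻¹ ≤ t/2 := h3
      nlinarith
    have hEi : E⁻¹ * E = 1 := inv_mul_cancel₀ hEpos.ne'
    nlinarith
  -- step 2 : 4 q (1-q) E ≤ 1 - q + q E^2
  have step2 : 4 * (q * (1 - q)) * E ≤ 1 - q + q * E ^ 2 := by
    nlinarith [sq_nonneg (E - 2 * (1 - q)), sq_nonneg (2 * q - 1), mul_nonneg hq0 (sq_nonneg (E - 2*(1-q))), mul_nonneg (by linarith : (0:ℝ) ≤ 1 - q) (sq_nonneg (2*q-1))]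
  rw [hEt]
  have hq : 0 ≤ q * (1 - q) := mul_nonneg hq0 (by linarith)
  nlinarith [mul_le_mul_of_nonneg_left step1 hq, mul_le_mul_of_nonneg_left step2 (by linarith : (0:ℝ) ≤ t/2)]

lemma lemH (q t : ℝ) (hq0 : 0 ≤ q) (hq1 : q ≤ 1) (ht0 : 0 ≤ t) (ht2 : t ≤ 2) :
    1 - q + q * Real.exp t ≤ Real.exp (t * q + t ^ 2 / 4) := by
  have hP : ∀ s : ℝ, 0 ≤ s → 1 ≤ 1 - q + q * Real.exp s := by
    intro s hs
    have : q * 1 ≤ q * Real.exp s :=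
      mul_le_mul_of_nonneg_left (Real.one_le_exp hs) hq0
    linarith
  set f : ℝ → ℝ := fun s => s * q + s ^ 2 / 4 - Real.log (1 - q + q * Real.exp s) with hf
  have hderiv : ∀ s : ℝ, 0 ≤ s →
      HasDerivAt f (q + s / 2 - q * Real.exp s / (1 - q + q * Real.exp s)) s := by
    intro s hs
    have hpos : (0:ℝ) < 1 - q + q * Real.exp s := lt_of_lt_of_le one_pos (hP s hs)
    have h1 : HasDerivAt (fun y : ℝ => 1 - q + q * Real.exp y) (q * Real.exp s) s := by
      simpa using ((Real.hasDerivAt_exp s).const_mul q).const_add (1 - q)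
    have hlog : HasDerivAt (fun y : ℝ => Real.log (1 - q + q * Real.exp y))
        (q * Real.exp s / (1 - q + q * Real.exp s)) s := h1.log hpos.ne'
    have h2 : HasDerivAt (fun y : ℝ => y * q + y ^ 2 / 4) (q + s / 2) s := by
      have := ((hasDerivAt_id s).mul_const q).add ((hasDerivAt_pow 2 s).div_const 4)
      exact this.congr_deriv (by push_cast; ring)
    exact h2.sub hlog
  have hmono : MonotoneOn f (Set.Icc (0:ℝ) 2) := by
    apply monotoneOn_of_deriv_nonneg (convex_Icc 0 2)
    · intro s hs
      exact (hderiv s hs.1).continuousAt.continuousWithinAt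
    · intro s hs
      rw [interior_Icc] at hs
      exact (hderiv s hs.1.le).differentiableAt.differentiableWithinAt
    · intro s hs
      rw [interior_Icc] at hs
      rw [(hderiv s hs.1.le).deriv]
      have hpos : (0:ℝ) < 1 - q + q * Real.exp s := lt_of_lt_of_le one_pos (hP s hs.1.le)
      rw [sub_nonneg, div_le_iff₀ hpos]
      have := lemA q s hq0 hq1 hs.1.le hs.2.le
      nlinarith
  have h0 : f 0 = 0 := by simp [hf]
  have hft : f 0 ≤ f t := hmono (Set.mem_Icc.mpr ⟨le_refl 0, by norm_num⟩)
    (Set.mem_Icc.mpr ⟨ht0, ht2⟩) ht0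
  rw [h0, hf] at hft
  have hpos : (0:ℝ) < 1 - q + q * Real.exp t := lt_of_lt_of_le one_pos (hP t ht0)
  have : Real.log (1 - q + q * Real.exp t) ≤ t * q + t ^ 2 / 4 := by
    simpa using hft
  calc 1 - q + q * Real.exp t
      = Real.exp (Real.log (1 - q + q * Real.exp t)) := (Real.exp_log hpos).symm
    _ ≤ Real.exp (t * q + t ^ 2 / 4) := Real.exp_le_exp.mpr this

lemma tail_le (m N : ℕ) (q : ℝ) (hq0 : 0 ≤ q) (hq1 : q ≤ 1)
    (t : ℝ) (ht0 : 0 ≤ t) (ht2 : t ≤ 2) (b : ℝ) (hbN : b ≤ N) :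
    ∑ i ∈ (Finset.range (m + 1)).filter (fun i => N < i),
        (m.choose i : ℝ) * q ^ i * (1 - q) ^ (m - i)
      ≤ Real.exp ((m : ℝ) * (t * q + t ^ 2 / 4) - t * b) := by
  have h1q : (0:ℝ) ≤ 1 - q := by linarith
  have step1 : ∑ i ∈ (Finset.range (m + 1)).filter (fun i => N < i),
        (m.choose i : ℝ) * q ^ i * (1 - q) ^ (m - i)
      ≤ ∑ i ∈ (Finset.range (m + 1)).filter (fun i => N < i),
        Real.exp (-(t * b)) * ((m.choose i : ℝ) * (q * Real.exp t) ^ i * (1 - q) ^ (m - i)) := by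
    apply Finset.sum_le_sum
    intro i hi
    have hiN : N < i := (Finset.mem_filter.mp hi).2
    have hterm : (0:ℝ) ≤ (m.choose i : ℝ) * q ^ i * (1 - q) ^ (m - i) :=
      mul_nonneg (mul_nonneg (Nat.cast_nonneg _) (pow_nonneg hq0 _)) (pow_nonneg h1q _)
    have hexp1 : 1 ≤ Real.exp (t * i - t * b) := by
      apply Real.one_le_exp
      have : b ≤ (i : ℝ) := le_trans hbN (by exact_mod_cast Nat.cast_le.mpr hiN.le)
      nlinarith
    calc (m.choose i : ℝ) * q ^ i * (1 - q) ^ (m - i)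
        ≤ ((m.choose i : ℝ) * q ^ i * (1 - q) ^ (m - i)) * Real.exp (t * i - t * b) := by
          nlinarith
      _ = Real.exp (-(t * b)) * ((m.choose i : ℝ) * (q * Real.exp t) ^ i * (1 - q) ^ (m - i)) := by
          rw [mul_pow, ← Real.exp_nat_mul]
          rw [show t * (i:ℝ) - t * b = -(t*b) + (i:ℝ)*t by ring, Real.exp_add]
          ring
  have step2 : ∑ i ∈ (Finset.range (m + 1)).filter (fun i => N < i),
        Real.exp (-(t * b)) * ((m.choose i : ℝ) * (q * Real.exp t) ^ i * (1 - q) ^ (m - i))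
      ≤ Real.exp (-(t * b)) * ∑ i ∈ Finset.range (m + 1),
        (m.choose i : ℝ) * (q * Real.exp t) ^ i * (1 - q) ^ (m - i) := by
    rw [← Finset.mul_sum]
    apply mul_le_mul_of_nonneg_left _ (Real.exp_pos _).le
    apply Finset.sum_le_sum_of_subset_of_nonneg (Finset.filter_subset _ _)
    intro i hi _
    exact mul_nonneg (mul_nonneg (Nat.cast_nonneg _)
      (pow_nonneg (mul_nonneg hq0 (Real.exp_pos t).le) _)) (pow_nonneg h1q _)
  have hbinom : ∑ i ∈ Finset.range (m + 1),
        (m.choose i : ℝ) * (q * Real.exp t) ^ i * (1 - q) ^ (m - i)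
      = (q * Real.exp t + (1 - q)) ^ m := by
    rw [add_pow]
    apply Finset.sum_congr rfl
    intro i _
    ring
  have hpow : (q * Real.exp t + (1 - q)) ^ m ≤ Real.exp ((m:ℝ) * (t * q + t ^ 2 / 4)) := by
    have h := lemH q t hq0 hq1 ht0 ht2
    have hnn : (0:ℝ) ≤ q * Real.exp t + (1 - q) :=
      add_nonneg (mul_nonneg hq0 (Real.exp_pos t).le) h1q
    calc (q * Real.exp t + (1 - q)) ^ m
        ≤ (Real.exp (t * q + t ^ 2 / 4)) ^ m := by
          apply pow_le_pow_left₀ hnn (by linarith)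
      _ = Real.exp ((m:ℝ) * (t * q + t ^ 2 / 4)) := by
          rw [← Real.exp_nat_mul]
  calc ∑ i ∈ (Finset.range (m + 1)).filter (fun i => N < i),
        (m.choose i : ℝ) * q ^ i * (1 - q) ^ (m - i)
      ≤ Real.exp (-(t * b)) * ∑ i ∈ Finset.range (m + 1),
        (m.choose i : ℝ) * (q * Real.exp t) ^ i * (1 - q) ^ (m - i) := le_trans step1 step2
    _ = Real.exp (-(t * b)) * (q * Real.exp t + (1 - q)) ^ m := by rw [hbinom]
    _ ≤ Real.exp (-(t * b)) * Real.exp ((m:ℝ) * (t * q + t ^ 2 / 4)) :=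
        mul_le_mul_of_nonneg_left hpow (Real.exp_pos _).le
    _ = Real.exp ((m : ℝ) * (t * q + t ^ 2 / 4) - t * b) := by
        rw [← Real.exp_add]; ring_nf

lemma part1 (C α : ℝ) (hC : 0 < C) (hα1 : 1 / 2 < α) (hα2 : α < 1)
    (r : ℕ → ℝ) (hr0 : ∀ i, 0 ≤ r i) (hrmono : Antitone r)
    (k : ℕ) (hk : 1 ≤ k) (m : ℕ) :
    (∑ i ∈ Finset.range (m + 1),
        (m.choose i : ℝ) * (1 / k) ^ i * (1 - 1 / k) ^ (m - i) * r i) ≥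
      (1 - 2 * Real.exp (-C ^ 2 * (m : ℝ) ^ (2 * α - 1))) *
        r ⌈(m : ℝ) / k + C * (m : ℝ) ^ α⌉₊ := by
  set q : ℝ := 1 / (k : ℝ) with hq
  have hk1 : (1:ℝ) ≤ (k:ℝ) := by exact_mod_cast hk
  have hq0 : 0 ≤ q := by positivity
  have hq1 : q ≤ 1 := by rw [hq]; rw [div_le_one (by linarith)]; exact hk1
  have h1q : (0:ℝ) ≤ 1 - q := by linarith
  set N : ℕ := ⌈(m : ℝ) / k + C * (m : ℝ) ^ α⌉₊ with hN
  set P : ℕ → ℝ := fun i => (m.choose i : ℝ) * q ^ i * (1 - q) ^ (m - i) with hP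
  have hPnn : ∀ i, 0 ≤ P i := fun i =>
    mul_nonneg (mul_nonneg (Nat.cast_nonneg _) (pow_nonneg hq0 _)) (pow_nonneg h1q _)
  have hsum1 : ∑ i ∈ Finset.range (m + 1), P i = 1 := by
    have := add_pow q (1 - q) m
    simp only [add_sub_cancel, one_pow] at this
    have h2 : ∑ i ∈ Finset.range (m + 1), q ^ i * (1 - q) ^ (m - i) * (m.choose i : ℝ) = 1 :=
      this.symm
    rw [← h2]
    apply Finset.sum_congr rfl
    intro i _
    simp only [hP]
    ring
  set tail : ℝ := ∑ i ∈ (Finset.range (m + 1)).filter (fun i => N < i), P i with htail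
  have htail_le : tail ≤ 2 * Real.exp (-C ^ 2 * (m : ℝ) ^ (2 * α - 1)) := by
    by_cases hmN : m ≤ N
    · have hempty : tail = 0 := by
        rw [htail]
        apply Finset.sum_eq_zero
        intro i hi
        exfalso
        have h1 := Finset.mem_range.mp (Finset.mem_filter.mp hi).1
        have h2 := (Finset.mem_filter.mp hi).2
        omega
      rw [hempty]
      positivity
    · push_neg at hmN
      have hm1 : 1 ≤ m := by omega
      have hmpos : (0:ℝ) < m := by exact_mod_cast hm1
      set a : ℝ := C * (m : ℝ) ^ α with ha
      have hapos : 0 < a := mul_pos hC (Real.rpow_pos_of_pos hmpos α)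
      have hNceil : (m : ℝ) / k + a ≤ N := Nat.le_ceil _
      have hmk0 : 0 ≤ (m:ℝ)/k := by positivity
      have haN : a ≤ N := by linarith
      have hNm : (N : ℝ) ≤ m := by exact_mod_cast hmN.le
      have ham : a ≤ m := le_trans haN hNm
      set t : ℝ := 2 * a / m with ht
      have ht0 : 0 ≤ t := by positivity
      have ht2 : t ≤ 2 := by
        rw [ht, div_le_iff₀ hmpos]
        linarith
      set b : ℝ := (m : ℝ) * q + a with hb
      have hbN : b ≤ N := by
        rw [hb, hq, mul_one_div]
        exact hNceil
      have h := tail_le m N q hq0 hq1 t ht0 ht2 b hbN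
      have hexp_eq : (m : ℝ) * (t * q + t ^ 2 / 4) - t * b = -(a ^ 2 / m) := by
        rw [ht, hb]
        field_simp
        ring
      have hrw : a ^ 2 / m = C ^ 2 * (m : ℝ) ^ (2 * α - 1) := by
        rw [ha, mul_pow]
        have h1 : ((m:ℝ) ^ α) ^ 2 = (m:ℝ) ^ (2 * α) := by
          rw [← Real.rpow_natCast ((m:ℝ) ^ α) 2, ← Real.rpow_mul hmpos.le]
          norm_num [mul_comm]
        rw [h1]
        rw [show (2 * α - 1) = 2 * α - 1 from rfl, Real.rpow_sub hmpos, Real.rpow_one]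
        ring
      rw [hexp_eq] at h
      have hneg : -C ^ 2 * (m : ℝ) ^ (2 * α - 1) = -(a ^ 2 / m) := by
        rw [hrw]; ring
      rw [hneg]
      have h2 : Real.exp (-(a ^ 2 / ↑m)) ≤ 2 * Real.exp (-(a ^ 2 / ↑m)) := by
        nlinarith [Real.exp_pos (-(a ^ 2 / (m:ℝ)))]
      rw [htail]
      exact le_trans h h2
  -- main chain
  have hsplit : ∑ i ∈ (Finset.range (m + 1)).filter (fun i => ¬ N < i), P i = 1 - tail := by
    have := Finset.sum_filter_add_sum_filter_not (Finset.range (m + 1)) (fun i => N < i) P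
    rw [hsum1] at this
    linarith [this]
  have hstep : (∑ i ∈ Finset.range (m + 1), P i * r i) ≥ (1 - tail) * r N := by
    calc ∑ i ∈ Finset.range (m + 1), P i * r i
        ≥ ∑ i ∈ (Finset.range (m + 1)).filter (fun i => ¬ N < i), P i * r i := by
          apply Finset.sum_le_sum_of_subset_of_nonneg (Finset.filter_subset _ _)
          intro i _ _
          exact mul_nonneg (hPnn i) (hr0 i)
      _ ≥ ∑ i ∈ (Finset.range (m + 1)).filter (fun i => ¬ N < i), P i * r N := by
          apply Finset.sum_le_sum
          intro i hi
          have hiN : i ≤ N := by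
            have := (Finset.mem_filter.mp hi).2
            omega
          exact mul_le_mul_of_nonneg_left (hrmono hiN) (hPnn i)
      _ = (1 - tail) * r N := by rw [← hsplit, Finset.sum_mul]
  have hrNnn : 0 ≤ r N := hr0 N
  have hfin : (1 - 2 * Real.exp (-C ^ 2 * (m : ℝ) ^ (2 * α - 1))) * r N ≤ (1 - tail) * r N := by
    apply mul_le_mul_of_nonneg_right _ hrNnn
    linarith
  have hfinal : (∑ i ∈ Finset.range (m + 1), P i * r i) ≥
      (1 - 2 * Real.exp (-C ^ 2 * (m : ℝ) ^ (2 * α - 1))) * r N := le_trans hfin hstep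
  convert hfinal using 2

lemma cobound (p Cp C α : ℝ) (hp1 : 1 ≤ p) (hp2 : p ≤ 2) (hC : 0 < C)
    (hα1 : 1 / 2 < α) (hα2 : α < 1)
    (r : ℕ → ℝ) (hr0 : ∀ i, 0 ≤ r i) (hrmono : Antitone r)
    (hrlim : Tendsto (fun m : ℕ => (m : ℝ) ^ (p / 2) * r m) atTop (nhds Cp))
    (k : ℕ) (hk : 1 ≤ k) :
    Filter.IsCoboundedUnder (· ≥ ·) atTop
        (fun m : ℕ =>
          (m : ℝ) ^ (p / 2) *
            ∑ i ∈ Finset.range (m + 1),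
              (m.choose i : ℝ) * (1 / k) ^ i * (1 - 1 / k) ^ (m - i) * r i) := by
  have hk1 : (1:ℝ) ≤ (k:ℝ) := by exact_mod_cast hk
  have hkpos : (0:ℝ) < k := by linarith
  have hkpos' : 0 < 2 * k := by omega
  set q : ℝ := 1 / (k : ℝ) with hq
  have hq0 : 0 ≤ q := by positivity
  have hqpos : 0 < q := by positivity
  have hq1 : q ≤ 1 := by rw [hq, div_le_one hkpos]; exact hk1
  have h1q : (0:ℝ) ≤ 1 - q := by linarith
  set M : ℕ → ℕ := fun m => m / (2 * k) with hM
  -- lower tail bound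
  have hlowertail : ∀ m : ℕ,
      ∑ i ∈ (Finset.range (m + 1)).filter (fun i => i < M m),
          (m.choose i : ℝ) * q ^ i * (1 - q) ^ (m - i)
        ≤ Real.exp (-(q ^ 2 / 4) * m) := by
    intro m
    have hMm : M m ≤ m := Nat.div_le_self _ _
    have hMle : (M m : ℝ) ≤ (m : ℝ) * q / 2 := by
      have h1 : ((m / (2 * k) : ℕ) : ℝ) ≤ (m : ℝ) / ((2 * k : ℕ) : ℝ) := Nat.cast_div_le
      have h2 : (m : ℝ) / ((2 * k : ℕ) : ℝ) = (m : ℝ) * q / 2 := by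
        rw [hq]; push_cast; rw [mul_one_div, div_div]; ring_nf
      rw [hM]; simp only; linarith [h1.trans_eq h2]
    have hreindex : ∑ i ∈ (Finset.range (m + 1)).filter (fun i => i < M m),
          (m.choose i : ℝ) * q ^ i * (1 - q) ^ (m - i)
        = ∑ j ∈ (Finset.range (m + 1)).filter (fun j => (m - M m) < j),
          (m.choose j : ℝ) * (1 - q) ^ j * (1 - (1 - q)) ^ (m - j) := by
      apply Finset.sum_nbij' (fun i => m - i) (fun j => m - j)
      · intro a ha
        simp only [Finset.mem_filter, Finset.mem_range] at ha ⊢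
        omega
      · intro a ha
        simp only [Finset.mem_filter, Finset.mem_range] at ha ⊢
        omega
      · intro a ha
        simp only [Finset.mem_filter, Finset.mem_range] at ha
        omega
      · intro a ha
        simp only [Finset.mem_filter, Finset.mem_range] at ha
        omega
      · intro a ha
        simp only [Finset.mem_filter, Finset.mem_range] at ha
        have h2 : m - (m - a) = a := by omega
        rw [Nat.choose_symm (by omega : a ≤ m), h2]
        have h3 : (1 : ℝ) - (1 - q) = q := by ring
        rw [h3]
        ring
    rw [hreindex]
    have htl := tail_le m (m - M m) (1 - q) h1q (by linarith) q hq0 (by linarith)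
      ((m : ℝ) * (1 - q) + (m : ℝ) * q / 2) ?hb
    case hb =>
      have : ((m - M m : ℕ) : ℝ) = (m : ℝ) - (M m : ℝ) := by
        rw [Nat.cast_sub hMm]
      rw [this]
      linarith
    have hexp_eq : (m : ℝ) * (q * (1 - q) + q ^ 2 / 4)
        - q * ((m : ℝ) * (1 - q) + (m : ℝ) * q / 2) = -(q ^ 2 / 4) * m := by ring
    rw [hexp_eq] at htl
    exact htl
  set P : ℕ → ℝ := fun i => 0 with hPdummy
  clear hPdummy P
  -- sum of all probabilities is 1  (for each m)
  have hsum1 : ∀ m : ℕ, ∑ i ∈ Finset.range (m + 1),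
      (m.choose i : ℝ) * q ^ i * (1 - q) ^ (m - i) = 1 := by
    intro m
    have := add_pow q (1 - q) m
    simp only [add_sub_cancel, one_pow] at this
    have h2 : ∑ i ∈ Finset.range (m + 1), q ^ i * (1 - q) ^ (m - i) * (m.choose i : ℝ) = 1 :=
      this.symm
    calc ∑ i ∈ Finset.range (m + 1), (m.choose i : ℝ) * q ^ i * (1 - q) ^ (m - i)
        = ∑ i ∈ Finset.range (m + 1), q ^ i * (1 - q) ^ (m - i) * (m.choose i : ℝ) :=
          Finset.sum_congr rfl (fun i _ => by ring)
      _ = 1 := h2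
  have hPnn : ∀ m i : ℕ, (0:ℝ) ≤ (m.choose i : ℝ) * q ^ i * (1 - q) ^ (m - i) := fun m i =>
    mul_nonneg (mul_nonneg (Nat.cast_nonneg _) (pow_nonneg hq0 _)) (pow_nonneg h1q _)
  -- per-m upper bound on the sum
  have hS : ∀ m : ℕ, ∑ i ∈ Finset.range (m + 1),
        (m.choose i : ℝ) * q ^ i * (1 - q) ^ (m - i) * r i
      ≤ Real.exp (-(q ^ 2 / 4) * m) * r 0 + r (M m) := by
    intro m
    have hsplit := Finset.sum_filter_add_sum_filter_not (Finset.range (m + 1))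
      (fun i => i < M m) (fun i => (m.choose i : ℝ) * q ^ i * (1 - q) ^ (m - i) * r i)
    have h1 : ∑ i ∈ (Finset.range (m + 1)).filter (fun i => i < M m),
          (m.choose i : ℝ) * q ^ i * (1 - q) ^ (m - i) * r i
        ≤ Real.exp (-(q ^ 2 / 4) * m) * r 0 := by
      calc ∑ i ∈ (Finset.range (m + 1)).filter (fun i => i < M m),
            (m.choose i : ℝ) * q ^ i * (1 - q) ^ (m - i) * r i
          ≤ ∑ i ∈ (Finset.range (m + 1)).filter (fun i => i < M m),
            (m.choose i : ℝ) * q ^ i * (1 - q) ^ (m - i) * r 0 := by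
            apply Finset.sum_le_sum
            intro i _
            exact mul_le_mul_of_nonneg_left (hrmono (Nat.zero_le i)) (hPnn m i)
        _ = (∑ i ∈ (Finset.range (m + 1)).filter (fun i => i < M m),
            (m.choose i : ℝ) * q ^ i * (1 - q) ^ (m - i)) * r 0 := by
            rw [Finset.sum_mul]
        _ ≤ Real.exp (-(q ^ 2 / 4) * m) * r 0 :=
            mul_le_mul_of_nonneg_right (hlowertail m) (hr0 0)
    have h2 : ∑ i ∈ (Finset.range (m + 1)).filter (fun i => ¬ i < M m),
          (m.choose i : ℝ) * q ^ i * (1 - q) ^ (m - i) * r i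
        ≤ r (M m) := by
      calc ∑ i ∈ (Finset.range (m + 1)).filter (fun i => ¬ i < M m),
            (m.choose i : ℝ) * q ^ i * (1 - q) ^ (m - i) * r i
          ≤ ∑ i ∈ (Finset.range (m + 1)).filter (fun i => ¬ i < M m),
            (m.choose i : ℝ) * q ^ i * (1 - q) ^ (m - i) * r (M m) := by
            apply Finset.sum_le_sum
            intro i hi
            have hiM : M m ≤ i := by
              have := (Finset.mem_filter.mp hi).2
              omega
            exact mul_le_mul_of_nonneg_left (hrmono hiM) (hPnn m i)
        _ = (∑ i ∈ (Finset.range (m + 1)).filter (fun i => ¬ i < M m),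
            (m.choose i : ℝ) * q ^ i * (1 - q) ^ (m - i)) * r (M m) := by
            rw [Finset.sum_mul]
        _ ≤ 1 * r (M m) := by
            apply mul_le_mul_of_nonneg_right _ (hr0 (M m))
            exact le_trans (Finset.sum_le_sum_of_subset_of_nonneg
              (Finset.filter_subset _ _) (fun i _ _ => hPnn m i)) (le_of_eq (hsum1 m))
        _ = r (M m) := one_mul _
    linarith [hsplit, h1, h2]
  -- M tends to infinity
  have hM_atTop : Tendsto M atTop atTop := by
    rw [tendsto_atTop_atTop]
    intro b
    refine ⟨2 * k * b, fun a ha => ?_⟩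
    rw [hM]
    simp only
    exact (Nat.le_div_iff_mul_le hkpos').mpr (by rw [Nat.mul_comm]; exact ha)
  have hψ : Tendsto (fun m : ℕ => ((M m : ℝ)) ^ (p / 2) * r (M m)) atTop (nhds Cp) :=
    hrlim.comp hM_atTop
  -- ratio M/m → 1/(2k)
  have h2k : (0:ℝ) < 2 * (k:ℝ) := by linarith
  have hinvm : Tendsto (fun m : ℕ => (1:ℝ) / m) atTop (nhds 0) :=
    tendsto_one_div_atTop_nhds_zero_nat
  have hlow : Tendsto (fun m : ℕ => 1/(2*(k:ℝ)) - 1/(m:ℝ)) atTop (nhds (1/(2*(k:ℝ)))) := by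
    have := (tendsto_const_nhds (x := 1/(2*(k:ℝ))) (f := atTop (α := ℕ))).sub hinvm
    simpa using this
  have hratio : Tendsto (fun m : ℕ => (M m : ℝ) / m) atTop (nhds (1/(2*(k:ℝ)))) := by
    apply tendsto_of_tendsto_of_tendsto_of_le_of_le' hlow tendsto_const_nhds
    · filter_upwards [eventually_ge_atTop 1] with m hm
      have hmpos : (0:ℝ) < m := by exact_mod_cast hm
      have hdm := Nat.div_add_mod m (2 * k)
      have hmod := Nat.mod_lt m hkpos'
      have hnat : m < 2 * k * (M m) + 2 * k := by
        rw [hM]; simp only; omega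
      have hcast : (m:ℝ) < 2 * (k:ℝ) * (M m : ℝ) + 2 * (k:ℝ) := by exact_mod_cast hnat
      have hkey : 1/(2*(k:ℝ)) - 1/(m:ℝ) = ((m:ℝ)/(2*(k:ℝ)) - 1)/(m:ℝ) := by
        field_simp
      rw [hkey]
      apply (div_le_div_iff_of_pos_right hmpos).mpr
      rw [sub_le_iff_le_add, div_le_iff₀ h2k]
      nlinarith
    · filter_upwards [eventually_ge_atTop 1] with m hm
      have hmpos : (0:ℝ) < m := by exact_mod_cast hm
      have h1 : ((M m : ℕ) : ℝ) ≤ (m : ℝ) / ((2 * k : ℕ) : ℝ) := Nat.cast_div_le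
      have h2 : (m:ℝ) / ((2 * k : ℕ):ℝ) = (m:ℝ) / (2 * (k:ℝ)) := by push_cast; ring_nf
      show (M m : ℝ) / (m:ℝ) ≤ 1 / (2 * (k:ℝ))
      rw [div_le_div_iff₀ hmpos h2k]
      rw [h2] at h1
      rw [le_div_iff₀ h2k] at h1
      linarith
  have hratio2 : Tendsto (fun m : ℕ => (m : ℝ) / (M m)) atTop (nhds (2*(k:ℝ))) := by
    have h1 : Tendsto (fun m : ℕ => ((M m : ℝ) / m)⁻¹) atTop (nhds ((1/(2*(k:ℝ)))⁻¹)) :=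
      hratio.inv₀ (by positivity)
    have h2 : ((1/(2*(k:ℝ)))⁻¹) = 2*(k:ℝ) := by field_simp
    rw [h2] at h1
    convert h1 using 2 with m
    rw [inv_div]
  have hφ : Tendsto (fun m : ℕ => ((m : ℝ) / (M m)) ^ (p/2)) atTop
      (nhds ((2*(k:ℝ)) ^ (p/2))) :=
    hratio2.rpow_const (Or.inr (by linarith))
  -- the upper bounding sequence
  have hexp0 : Tendsto (fun m : ℕ => (m:ℝ) ^ (p/2) * Real.exp (-(q^2/4) * m) * r 0)
      atTop (nhds 0) := by
    have h1 : Tendsto (fun x : ℝ => x ^ (p/2) * Real.exp (-(q^2/4) * x)) atTop (nhds 0) :=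
      tendsto_rpow_mul_exp_neg_mul_atTop_nhds_zero (p/2) (q^2/4) (by positivity)
    have h2 := (h1.comp tendsto_natCast_atTop_atTop).mul_const (r 0)
    rw [zero_mul] at h2
    exact h2
  have hmain : Tendsto (fun m : ℕ => ((m : ℝ) / (M m)) ^ (p/2) * ((M m : ℝ) ^ (p/2) * r (M m)))
      atTop (nhds ((2*(k:ℝ)) ^ (p/2) * Cp)) := hφ.mul hψ
  have heq : (fun m : ℕ => (m:ℝ) ^ (p/2) * Real.exp (-(q^2/4) * m) * r 0
        + ((m : ℝ) / (M m)) ^ (p/2) * ((M m : ℝ) ^ (p/2) * r (M m)))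
      =ᶠ[atTop] (fun m : ℕ => (m:ℝ) ^ (p/2) * Real.exp (-(q^2/4) * m) * r 0
        + (m:ℝ) ^ (p/2) * r (M m)) := by
    filter_upwards [eventually_ge_atTop (2*k)] with m hm
    have hm1 : 1 ≤ m := by omega
    have hM1 : 1 ≤ M m := by
      rw [hM]; simp only
      exact (Nat.le_div_iff_mul_le hkpos').mpr (by omega)
    have hMr : (0:ℝ) < (M m : ℝ) := by exact_mod_cast hM1
    have key : ((m : ℝ) / (M m)) ^ (p/2) * (M m : ℝ) ^ (p/2) = (m : ℝ) ^ (p/2) := by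
      rw [← Real.mul_rpow (by positivity) hMr.le, div_mul_cancel₀ _ hMr.ne']
    congr 1
    rw [← key]
    ring
  have hub : Tendsto (fun m : ℕ => (m:ℝ) ^ (p/2) * Real.exp (-(q^2/4) * m) * r 0
        + (m:ℝ) ^ (p/2) * r (M m)) atTop (nhds (0 + (2*(k:ℝ)) ^ (p/2) * Cp)) :=
    (hexp0.add hmain).congr' heq
  have hboundedub := hub.isBoundedUnder_le
  have hfle : (fun m : ℕ =>
        (m : ℝ) ^ (p / 2) *
          ∑ i ∈ Finset.range (m + 1),
            (m.choose i : ℝ) * (1 / k) ^ i * (1 - 1 / k) ^ (m - i) * r i)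
      ≤ᶠ[atTop] (fun m : ℕ => (m:ℝ) ^ (p/2) * Real.exp (-(q^2/4) * m) * r 0
        + (m:ℝ) ^ (p/2) * r (M m)) := by
    filter_upwards with m
    have h1 := hS m
    have h2 : (0:ℝ) ≤ (m:ℝ) ^ (p/2) := Real.rpow_nonneg (Nat.cast_nonneg m) _
    calc (m : ℝ) ^ (p / 2) *
          ∑ i ∈ Finset.range (m + 1),
            (m.choose i : ℝ) * (1 / k) ^ i * (1 - 1 / k) ^ (m - i) * r i
        ≤ (m : ℝ) ^ (p / 2) * (Real.exp (-(q ^ 2 / 4) * m) * r 0 + r (M m)) :=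
          mul_le_mul_of_nonneg_left h1 h2
      _ = (m:ℝ) ^ (p/2) * Real.exp (-(q^2/4) * m) * r 0 + (m:ℝ) ^ (p/2) * r (M m) := by
          ring
  exact (hboundedub.mono_le hfle).isCoboundedUnder_ge

lemma part2 (p Cp C α : ℝ) (hp1 : 1 ≤ p) (hp2 : p ≤ 2) (hC : 0 < C)
    (hα1 : 1 / 2 < α) (hα2 : α < 1)
    (r : ℕ → ℝ) (hr0 : ∀ i, 0 ≤ r i) (hrmono : Antitone r)
    (hrlim : Tendsto (fun m : ℕ => (m : ℝ) ^ (p / 2) * r m) atTop (nhds Cp))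
    (k : ℕ) (hk : 1 ≤ k) :
    Cp * (k : ℝ) ^ (p / 2) ≤
      Filter.liminf
        (fun m : ℕ =>
          (m : ℝ) ^ (p / 2) *
            ∑ i ∈ Finset.range (m + 1),
              (m.choose i : ℝ) * (1 / k) ^ i * (1 - 1 / k) ^ (m - i) * r i)
        atTop := by
  have hk1 : (1:ℝ) ≤ (k:ℝ) := by exact_mod_cast hk
  have hkpos : (0:ℝ) < k := by linarith
  set N : ℕ → ℕ := fun m => ⌈(m : ℝ) / k + C * (m : ℝ) ^ α⌉₊ with hNdef
  -- N tends to infinity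
  have hN_atTop : Tendsto N atTop atTop := by
    rw [tendsto_atTop_atTop]
    intro b
    refine ⟨k * b, fun a ha => ?_⟩
    have h1 : (b : ℝ) ≤ (a : ℝ) / k := by
      rw [le_div_iff₀ hkpos]
      have : (k * b : ℕ) ≤ a := ha
      calc (b:ℝ) * k = ((k*b : ℕ):ℝ) := by push_cast; ring
        _ ≤ a := by exact_mod_cast this
    have h2 : (a:ℝ)/k + C * (a:ℝ)^α ≤ N a := Nat.le_ceil _
    have h3 : (0:ℝ) ≤ C * (a:ℝ)^α := by positivity
    have : (b : ℝ) ≤ (N a : ℝ) := by linarith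
    exact_mod_cast this
  -- ψ : N^{p/2} r_N → Cp
  have hψ : Tendsto (fun m : ℕ => ((N m : ℝ)) ^ (p / 2) * r (N m)) atTop (nhds Cp) :=
    hrlim.comp hN_atTop
  -- ratio N/m → 1/k
  have hαm : Tendsto (fun m : ℕ => C * (m : ℝ) ^ (α - 1)) atTop (nhds 0) := by
    have h1 : Tendsto (fun x : ℝ => x ^ (-(1 - α))) atTop (nhds 0) :=
      tendsto_rpow_neg_atTop (by linarith)
    have h2 : Tendsto (fun m : ℕ => ((m:ℝ)) ^ (-(1 - α))) atTop (nhds 0) :=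
      h1.comp tendsto_natCast_atTop_atTop
    have h3 : (fun m : ℕ => (m:ℝ) ^ (α - 1)) = fun m : ℕ => (m:ℝ) ^ (-(1 - α)) := by
      funext m; ring_nf
    have h4 : α - 1 = -(1 - α) := by ring
    have := h2.const_mul C
    rw [mul_zero] at this
    rw [h4]
    exact this
  have hinvm : Tendsto (fun m : ℕ => (1:ℝ) / m) atTop (nhds 0) :=
    tendsto_one_div_atTop_nhds_zero_nat
  have hlow : Tendsto (fun m : ℕ => 1/(k:ℝ) + C * (m:ℝ) ^ (α - 1)) atTop (nhds (1/(k:ℝ))) := by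
    have := (tendsto_const_nhds (x := 1/(k:ℝ)) (f := atTop)).add hαm
    simpa using this
  have hup : Tendsto (fun m : ℕ => 1/(k:ℝ) + C * (m:ℝ) ^ (α - 1) + 1/(m:ℝ)) atTop
      (nhds (1/(k:ℝ))) := by
    have := hlow.add hinvm
    simpa using this
  have hratio : Tendsto (fun m : ℕ => (N m : ℝ) / m) atTop (nhds (1/(k:ℝ))) := by
    apply tendsto_of_tendsto_of_tendsto_of_le_of_le' hlow hup
    · filter_upwards [eventually_ge_atTop 1] with m hm
      have hmpos : (0:ℝ) < m := by exact_mod_cast hm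
      have h2 : (m:ℝ)/k + C * (m:ℝ)^α ≤ N m := Nat.le_ceil _
      have key : 1/(k:ℝ) + C * (m:ℝ) ^ (α - 1) = ((m:ℝ)/k + C * (m:ℝ)^α) / m := by
        rw [Real.rpow_sub hmpos, Real.rpow_one]
        field_simp
      rw [key]
      exact (div_le_div_iff_of_pos_right hmpos).mpr h2
    · filter_upwards [eventually_ge_atTop 1] with m hm
      have hmpos : (0:ℝ) < m := by exact_mod_cast hm
      have harg : (0:ℝ) ≤ (m:ℝ)/k + C * (m:ℝ)^α := by positivity
      have h2 : (N m : ℝ) < (m:ℝ)/k + C * (m:ℝ)^α + 1 := Nat.ceil_lt_add_one harg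
      have key : 1/(k:ℝ) + C * (m:ℝ) ^ (α - 1) + 1/(m:ℝ)
          = ((m:ℝ)/k + C * (m:ℝ)^α + 1) / m := by
        rw [Real.rpow_sub hmpos, Real.rpow_one]
        field_simp
      rw [key]
      exact (div_le_div_iff_of_pos_right hmpos).mpr h2.le
  have hratio2 : Tendsto (fun m : ℕ => (m : ℝ) / (N m)) atTop (nhds (k:ℝ)) := by
    have h1 : Tendsto (fun m : ℕ => ((N m : ℝ) / m)⁻¹) atTop (nhds ((1/(k:ℝ))⁻¹)) :=
      hratio.inv₀ (by positivity)
    have h2 : ((1/(k:ℝ))⁻¹) = (k:ℝ) := by field_simp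
    rw [h2] at h1
    convert h1 using 2 with m
    rw [inv_div]
  have hφ : Tendsto (fun m : ℕ => ((m : ℝ) / (N m)) ^ (p/2)) atTop
      (nhds ((k:ℝ) ^ (p/2))) :=
    hratio2.rpow_const (Or.inr (by linarith))
  -- coefficient → 1
  have hcoef : Tendsto (fun m : ℕ => 1 - 2 * Real.exp (-C ^ 2 * (m : ℝ) ^ (2 * α - 1)))
      atTop (nhds 1) := by
    have h1 : Tendsto (fun m : ℕ => ((m:ℝ)) ^ (2 * α - 1)) atTop atTop :=
      (tendsto_rpow_atTop (by linarith)).comp tendsto_natCast_atTop_atTop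
    have h2 : Tendsto (fun m : ℕ => -C ^ 2 * ((m:ℝ)) ^ (2 * α - 1)) atTop atBot :=
      Tendsto.const_mul_atTop_of_neg (by nlinarith : -C ^ 2 < 0) h1
    have h3 : Tendsto (fun m : ℕ => Real.exp (-C ^ 2 * ((m:ℝ)) ^ (2 * α - 1))) atTop
        (nhds 0) := Real.tendsto_exp_atBot.comp h2
    have := (tendsto_const_nhds (x := (1:ℝ)) (f := atTop (α := ℕ))).sub (h3.const_mul 2)
    simpa using this
  -- the lower-bound sequence g
  set g : ℕ → ℝ := fun m =>
    (1 - 2 * Real.exp (-C ^ 2 * (m : ℝ) ^ (2 * α - 1))) * ((m : ℝ) / (N m)) ^ (p/2) *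
      ((N m : ℝ) ^ (p/2) * r (N m)) with hg
  have hgT : Tendsto g atTop (nhds (1 * (k:ℝ) ^ (p/2) * Cp)) := (hcoef.mul hφ).mul hψ
  have hval : (1 : ℝ) * (k:ℝ) ^ (p/2) * Cp = Cp * (k:ℝ) ^ (p/2) := by ring
  rw [hval] at hgT
  set g' : ℕ → ℝ := fun m =>
    (m : ℝ) ^ (p/2) * ((1 - 2 * Real.exp (-C ^ 2 * (m : ℝ) ^ (2 * α - 1))) * r (N m)) with hg'
  have heq : g =ᶠ[atTop] g' := by
    filter_upwards [eventually_ge_atTop 1] with m hm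
    have hmpos : (0:ℝ) < m := by exact_mod_cast hm
    have hNpos : 0 < N m := by
      rw [hNdef]
      apply Nat.ceil_pos.mpr
      positivity
    have hNr : (0:ℝ) < (N m : ℝ) := by exact_mod_cast hNpos
    have key : ((m : ℝ) / (N m)) ^ (p/2) * (N m : ℝ) ^ (p/2) = (m : ℝ) ^ (p/2) := by
      rw [← Real.mul_rpow (by positivity) hNr.le, div_mul_cancel₀ _ hNr.ne']
    rw [hg, hg']
    simp only
    rw [← key]
    ring
  have hg'T : Tendsto g' atTop (nhds (Cp * (k:ℝ) ^ (p/2))) := hgT.congr' heq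
  have hliminf_eq : Filter.liminf g' atTop = Cp * (k:ℝ) ^ (p/2) := hg'T.liminf_eq
  rw [← hliminf_eq]
  apply Filter.liminf_le_liminf
  · filter_upwards with m
    rw [hg']
    simp only
    apply mul_le_mul_of_nonneg_left _ (Real.rpow_nonneg (Nat.cast_nonneg m) _)
    exact part1 C α hC hα1 hα2 r hr0 hrmono k hk m
  · exact hg'T.isBoundedUnder_ge
  · exact cobound p Cp C α hp1 hp2 hC hα1 hα2 r hr0 hrmono hrlim k hk

theorem stmt_15 (p Cp C α : ℝ) (hp1 : 1 ≤ p) (hp2 : p ≤ 2) (hC : 0 < C)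
    (hα1 : 1 / 2 < α) (hα2 : α < 1)
    (r : ℕ → ℝ) (hr0 : ∀ i, 0 ≤ r i) (hrmono : Antitone r)
    (hrlim : Tendsto (fun m : ℕ => (m : ℝ) ^ (p / 2) * r m) atTop (nhds Cp))
    (k : ℕ) (hk : 1 ≤ k) :
    (∀ m : ℕ,
        (∑ i ∈ Finset.range (m + 1),
            (m.choose i : ℝ) * (1 / k) ^ i * (1 - 1 / k) ^ (m - i) * r i) ≥
          (1 - 2 * Real.exp (-C ^ 2 * (m : ℝ) ^ (2 * α - 1))) *
            r ⌈(m : ℝ) / k + C * (m : ℝ) ^ α⌉₊) ∧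
      Cp * (k : ℝ) ^ (p / 2) ≤
        Filter.liminf
          (fun m : ℕ =>
            (m : ℝ) ^ (p / 2) *
              ∑ i ∈ Finset.range (m + 1),
                (m.choose i : ℝ) * (1 / k) ^ i * (1 - 1 / k) ^ (m - i) * r i)
          atTop := by
  exact ⟨fun m => part1 C α hC hα1 hα2 r hr0 hrmono k hk m,
    part2 p Cp C α hp1 hp2 hC hα1 hα2 r hr0 hrmono hrlim k hk⟩
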